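/- The set of off-by-one elements, namely {w ∈ ZMod (s*p) : w is a unit and ((w mod s)^(2^i) = 1 for some natural i, or (w mod p)^(2^j) = 1 for some natural j)}, has exactly 2^(k+l)·(q + r − 1) elements. -/

import Mathlib

open Set

lemma ncard_set_prod {α β : Type*} (A : Set α) (B : Set β) :
    (A ×ˢ B).ncard = A.ncard * B.ncard := by
  rw [← Nat.card_coe_set_eq, ← Nat.card_coe_set_eq, ← Nat.card_coe_set_eq,
    Nat.card_congr (Equiv.Set.prod A B), Nat.card_prod]

lemma prod_isUnit_iff {α β : Type*} [Monoid α] [Monoid β] (x : α × β) :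
    IsUnit x ↔ IsUnit x.1 ∧ IsUnit x.2 := by
  constructor
  · intro h
    exact ⟨h.map (MonoidHom.fst α β), h.map (MonoidHom.snd α β)⟩
  · rintro ⟨⟨u, hu⟩, ⟨v, hv⟩⟩
    exact ⟨⟨(↑u, ↑v), (↑u⁻¹, ↑v⁻¹), by simp [Prod.ext_iff], by simp [Prod.ext_iff]⟩,
      by simp [hu, hv, Prod.ext_iff]⟩

lemma card_units_set (p : ℕ) (hp : p.Prime) :
    {a : ZMod p | IsUnit a}.ncard = p - 1 := by
  haveI : Fact p.Prime := ⟨hp⟩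
  have h : {a : ZMod p | IsUnit a} = Set.range ((↑) : (ZMod p)ˣ → ZMod p) := by
    ext a
    simp [IsUnit, eq_comm]
  rw [h, ← Set.image_univ, Set.ncard_image_of_injective _ Units.val_injective, ncard_univ,
    Nat.card_eq_fintype_card, ZMod.card_units_eq_totient, Nat.totient_prime hp]

lemma card_two_power_roots (p k q : ℕ) (hp : p.Prime) (hq : Odd q)
    (hpeq : p = 2 ^ k * q + 1) :
    {a : ZMod p | ∃ i : ℕ, a ^ (2 ^ i) = 1}.ncard = 2 ^ k := by
  haveI : Fact p.Prime := ⟨hp⟩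
  have hq0 : 0 < q := hq.pos
  have hcardu : Fintype.card (ZMod p)ˣ = 2 ^ k * q := by
    rw [ZMod.card_units_eq_totient, Nat.totient_prime hp, hpeq]; omega
  -- reduce to units group
  have hset : {a : ZMod p | ∃ i : ℕ, a ^ (2 ^ i) = 1}
      = ((↑) : (ZMod p)ˣ → ZMod p) '' {u : (ZMod p)ˣ | u ^ (2 ^ k) = 1} := by
    ext a
    constructor
    · rintro ⟨i, hi⟩
      obtain ⟨v, rfl⟩ := IsUnit.of_pow_eq_one hi (pow_ne_zero i two_ne_zero)
      refine ⟨v, ?_, rfl⟩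
      have hv : v ^ (2 ^ i) = 1 := Units.ext (by push_cast; exact hi)
      have hd : orderOf v ∣ 2 ^ i := orderOf_dvd_of_pow_eq_one hv
      obtain ⟨m, hm, hom⟩ := (Nat.dvd_prime_pow Nat.prime_two).mp hd
      have hdc : orderOf v ∣ 2 ^ k * q := by
        rw [← hcardu]; exact orderOf_dvd_card
      have h2m : (2 : ℕ) ^ m ∣ 2 ^ k := by
        have hco : Nat.Coprime (2 ^ m) q := (Nat.coprime_two_left.mpr hq).pow_left m
        exact hco.dvd_of_dvd_mul_right (hom ▸ hdc)
      show v ^ (2 ^ k) = 1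
      exact orderOf_dvd_iff_pow_eq_one.mp (hom ▸ h2m)
    · rintro ⟨v, hv, rfl⟩
      exact ⟨k, by rw [← Units.val_pow_eq_pow_val, show v ^ (2 ^ k) = 1 from hv, Units.val_one]⟩
  rw [hset, Set.ncard_image_of_injective _ Units.val_injective]
  -- now count in the cyclic group
  obtain ⟨g, hg⟩ := IsCyclic.exists_generator (α := (ZMod p)ˣ)
  have hog : orderOf g = 2 ^ k * q := by
    rw [orderOf_eq_card_of_forall_mem_zpowers hg, Nat.card_eq_fintype_card, hcardu]
  have hu : orderOf (g ^ q) = 2 ^ k := by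
    have hgcd : (2 ^ k * q).gcd q = q := Nat.gcd_eq_right (dvd_mul_left q (2 ^ k))
    rw [orderOf_pow, hog, hgcd, Nat.mul_div_cancel _ hq0]
  apply le_antisymm
  · classical
    rw [Set.ncard_eq_toFinset_card', Set.toFinset_setOf]
    exact IsCyclic.card_pow_eq_one_le (pow_pos two_pos k)
  · have hsub : (Subgroup.zpowers (g ^ q) : Set (ZMod p)ˣ)
        ⊆ {u : (ZMod p)ˣ | u ^ (2 ^ k) = 1} := by
      rintro b hb
      obtain ⟨m, rfl⟩ := Subgroup.mem_zpowers_iff.mp hb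
      have h1 : (g ^ q) ^ (2 ^ k) = 1 := by
        rw [← hu]; exact pow_orderOf_eq_one _
      show ((g ^ q) ^ m) ^ (2 ^ k) = 1
      rw [← zpow_natCast ((g^q)^m), ← zpow_mul, mul_comm, zpow_mul, zpow_natCast, h1, one_zpow]
    have h2 : (Subgroup.zpowers (g ^ q) : Set (ZMod p)ˣ).ncard = 2 ^ k := by
      rw [← Nat.card_coe_set_eq, SetLike.coe_sort_coe, Nat.card_zpowers, hu]
    have h3 := Set.ncard_le_ncard hsub (Set.toFinite _)
    omega

/-- Reduction `ZMod (s*p) → ZMod s`. -/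
def modS (s p : ℕ) : ZMod (s*p) →+* ZMod s := ZMod.castHom (dvd_mul_right s p) (ZMod s)
/-- Reduction `ZMod (s*p) → ZMod p`. -/
def modP (s p : ℕ) : ZMod (s*p) →+* ZMod p := ZMod.castHom (dvd_mul_left p s) (ZMod p)

theorem stmt_19 (s p k l q r : ℕ) (hs : s.Prime) (hp : p.Prime) (hsp : s ≠ p)
    (hk : 1 ≤ k) (hl : 1 ≤ l) (hq : Odd q) (hr : Odd r)
    (hseq : s = 2 ^ k * q + 1) (hpeq : p = 2 ^ l * r + 1) :
    {w : ZMod (s*p) | IsUnit w ∧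
      ((∃ i : ℕ, (modS s p w) ^ (2 ^ i) = 1) ∨
       (∃ j : ℕ, (modP s p w) ^ (2 ^ j) = 1))}.ncard
      = 2 ^ (k + l) * (q + r - 1) := by
  have hco : Nat.Coprime s p := (Nat.coprime_primes hs hp).mpr hsp
  haveI : NeZero s := ⟨hs.pos.ne'⟩
  haveI : NeZero p := ⟨hp.pos.ne'⟩
  let e : ZMod (s*p) ≃+* ZMod s × ZMod p := ZMod.chineseRemainder hco
  set A : Set (ZMod s) := {a | ∃ i : ℕ, a ^ (2 ^ i) = 1} with hA
  set B : Set (ZMod p) := {b | ∃ j : ℕ, b ^ (2 ^ j) = 1} with hB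
  set Us : Set (ZMod s) := {a | IsUnit a} with hUs
  set Up : Set (ZMod p) := {b | IsUnit b} with hUp
  have hAUs : A ⊆ Us := by
    rintro a ⟨i, hi⟩
    exact IsUnit.of_pow_eq_one hi (pow_ne_zero i two_ne_zero)
  have hBUp : B ⊆ Up := by
    rintro b ⟨j, hj⟩
    exact IsUnit.of_pow_eq_one hj (pow_ne_zero j two_ne_zero)
  have hmodS : ∀ w, modS s p w = (e w).1 := by
    have h : modS s p = (RingHom.fst (ZMod s) (ZMod p)).comp (e : ZMod (s*p) →+* ZMod s × ZMod p) :=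
      Subsingleton.elim _ _
    intro w; rw [h]; rfl
  have hmodP : ∀ w, modP s p w = (e w).2 := by
    have h : modP s p = (RingHom.snd (ZMod s) (ZMod p)).comp (e : ZMod (s*p) →+* ZMod s × ZMod p) :=
      Subsingleton.elim _ _
    intro w; rw [h]; rfl
  have hSeq : {w : ZMod (s*p) | IsUnit w ∧
      ((∃ i : ℕ, (modS s p w) ^ (2 ^ i) = 1) ∨
       (∃ j : ℕ, (modP s p w) ^ (2 ^ j) = 1))}
      = ⇑e.toEquiv ⁻¹' ((A ×ˢ Up) ∪ (Us ×ˢ B)) := by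
    ext w
    have hunit : IsUnit w ↔ IsUnit (e w).1 ∧ IsUnit (e w).2 := by
      rw [← prod_isUnit_iff]
      constructor
      · intro h; exact h.map (e : ZMod (s*p) →+* ZMod s × ZMod p)
      · intro h
        have := h.map (e.symm : ZMod s × ZMod p →+* ZMod (s*p))
        simpa using this
    simp only [Set.mem_setOf_eq, Set.mem_preimage, Set.mem_union, Set.mem_prod,
      hmodS, hmodP, hunit]
    constructor
    · rintro ⟨⟨h1, h2⟩, h3 | h3⟩
      · exact Or.inl ⟨h3, h2⟩
      · exact Or.inr ⟨h1, h3⟩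
    · rintro (⟨h1, h2⟩ | ⟨h1, h2⟩)
      · exact ⟨⟨hAUs h1, h2⟩, Or.inl h1⟩
      · exact ⟨⟨h1, hBUp h2⟩, Or.inr h2⟩
  rw [hSeq]
  have hpre : ⇑e.toEquiv ⁻¹' ((A ×ˢ Up) ∪ (Us ×ˢ B))
      = ⇑e.toEquiv.symm '' ((A ×ˢ Up) ∪ (Us ×ˢ B)) := by
    rw [Equiv.image_eq_preimage_symm, Equiv.symm_symm]
  rw [hpre, Set.ncard_image_of_injective _ e.toEquiv.symm.injective]
  have hinter : (A ×ˢ Up) ∩ (Us ×ˢ B) = A ×ˢ B := by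
    rw [Set.prod_inter_prod, Set.inter_eq_left.mpr hAUs, Set.inter_eq_right.mpr hBUp]
  have hiu := Set.ncard_union_add_ncard_inter (A ×ˢ Up) (Us ×ˢ B)
    (Set.toFinite _) (Set.toFinite _)
  rw [hinter] at hiu
  rw [ncard_set_prod, ncard_set_prod, ncard_set_prod] at hiu
  have hcA : A.ncard = 2 ^ k := card_two_power_roots s k q hs hq hseq
  have hcB : B.ncard = 2 ^ l := card_two_power_roots p l r hp hr hpeq
  have hcUs : Us.ncard = 2 ^ k * q := by
    rw [hUs, card_units_set s hs, hseq]; omega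
  have hcUp : Up.ncard = 2 ^ l * r := by
    rw [hUp, card_units_set p hp, hpeq]; omega
  rw [hcA, hcB, hcUs, hcUp] at hiu
  obtain ⟨a, rfl⟩ := hq
  obtain ⟨b, rfl⟩ := hr
  have key : 2 ^ k * (2 ^ l * (2 * b + 1)) + 2 ^ k * (2 * a + 1) * 2 ^ l
      = 2 ^ (k + l) * ((2 * a + 1) + (2 * b + 1) - 1) + 2 ^ k * 2 ^ l := by
    have h1 : (2 * a + 1) + (2 * b + 1) - 1 = 2 * a + 2 * b + 1 := by omega
    rw [h1, pow_add]; ring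
  omega
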